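/- The packing bound function cov does not come from a sandwich function: there is no sandwich function Ψ such that cov(C) = Ψ(G(C)) for every bounded Borel subset C of every ℝ^d, where G(C) is the graph with vertex set C and an edge between distinct x, y ∈ C exactly when |x − y| ≥ 2. (Indeed, if C consists of the three vertices of an equilateral triangle in ℝ^2 with side length strictly between √3 and 2, then G(C) has no edges, so any sandwich function gives value at most χ(G(C)) = 1, while cov(C) ≥ 2.) -/

import Mathlib

open scoped Pointwise
open MeasureTheory Bornology Filter

/-- `cov C` is the smallest number of open unit balls (centered anywhere) needed to cover `C`. -/
noncomputable def cov (d : ℕ) (C : Set (EuclideanSpace ℝ (Fin d))) : ℕ :=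
  sInf {m : ℕ | ∃ X : Finset (EuclideanSpace ℝ (Fin d)),
    X.card = m ∧ C ⊆ ⋃ x ∈ X, Metric.ball x 1}

/-- The join `G * H` of two graphs: the disjoint union of `G` and `H` together with all
edges between the two parts. -/
def graphJoin {V W : Type} (G : SimpleGraph V) (H : SimpleGraph W) :
    SimpleGraph (V ⊕ W) where
  Adj x y := match x, y with
    | Sum.inl a, Sum.inl b => G.Adj a b
    | Sum.inr a, Sum.inr b => H.Adj a b
    | Sum.inl _, Sum.inr _ => True
    | Sum.inr _, Sum.inl _ => True
  symm := ⟨fun x y => match x, y with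
    | Sum.inl _, Sum.inl _ => fun h => G.adj_symm h
    | Sum.inr _, Sum.inr _ => fun h => H.adj_symm h
    | Sum.inl _, Sum.inr _ => fun _ => trivial
    | Sum.inr _, Sum.inl _ => fun _ => trivial⟩
  loopless := ⟨fun x => by cases x <;> simp⟩

/-- A sandwich function: an assignment of a nonnegative real number to every graph with
finite chromatic number, taking the value `0` on empty graphs and `1` on one-point graphs,
monotone under graph homomorphisms, and additive under joins. -/
structure SandwichFunction where
  toFun : ∀ {V : Type}, SimpleGraph V → ℝ
  nonneg : ∀ {V : Type} (G : SimpleGraph V), G.chromaticNumber ≠ ⊤ → 0 ≤ toFun G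
  empty_eq : ∀ {V : Type} (G : SimpleGraph V), IsEmpty V → toFun G = 0
  single_eq : ∀ {V : Type} (G : SimpleGraph V), Nonempty V → Subsingleton V → toFun G = 1
  mono : ∀ {V W : Type} (G : SimpleGraph V) (H : SimpleGraph W),
    G.chromaticNumber ≠ ⊤ → H.chromaticNumber ≠ ⊤ → (G →g H) → toFun G ≤ toFun H
  join_add : ∀ {V W : Type} (G : SimpleGraph V) (H : SimpleGraph W),
    G.chromaticNumber ≠ ⊤ → H.chromaticNumber ≠ ⊤ →
    toFun (graphJoin G H) = toFun G + toFun H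

/-- The graph on a subset `C` of a metric space whose edges are the pairs of (distinct)
points at distance at least 2. -/
def farGraph {E : Type} [MetricSpace E] (C : Set E) : SimpleGraph C where
  Adj x y := x ≠ y ∧ 2 ≤ dist (x : E) (y : E)
  symm := ⟨fun x y h => ⟨h.1.symm, by rw [dist_comm]; exact h.2⟩⟩
  loopless := ⟨fun x h => h.1 rfl⟩

private def pt (t : ℝ) : EuclideanSpace ℝ (Fin 1) := WithLp.toLp 2 (fun _ => t)

private lemma pt_apply (t : ℝ) : pt t 0 = t := rfl

private lemma dist_e1 (x y : EuclideanSpace ℝ (Fin 1)) : dist x y = |x 0 - y 0| := by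
  rw [EuclideanSpace.dist_eq]
  simp [Fin.sum_univ_one, Real.sqrt_sq_eq_abs, Real.dist_eq]

/-- The function `cov` does not come from a sandwich function: there is
no sandwich function `Ψ` with `cov(C) = Ψ(G(C))` for all bounded Borel `C`, where `G(C)`
is the graph on `C` whose edges are the pairs at distance at least 2. -/
theorem cov_not_from_sandwichFunction :
    ¬ ∃ Ψ : SandwichFunction, ∀ (d : ℕ) (C : Set (EuclideanSpace ℝ (Fin d))),
      IsBounded C → MeasurableSet C → (cov d C : ℝ) = Ψ.toFun (farGraph C) := by
  classical
  rintro ⟨Ψ, hΨ⟩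
  set C : Set (EuclideanSpace ℝ (Fin 1)) := {x | x 0 ∈ Set.Ico (0:ℝ) 2} with hC
  have hbdd : IsBounded C := by
    apply Metric.isBounded_closedBall (x := (0 : EuclideanSpace ℝ (Fin 1))) (r := 2) |>.subset
    intro x hx
    simp only [Metric.mem_closedBall]
    rw [dist_e1]
    have h0 : (0 : EuclideanSpace ℝ (Fin 1)) 0 = 0 := rfl
    rw [h0, sub_zero]
    rcases hx with ⟨h1, h2⟩
    rw [abs_le]; constructor <;> linarith
  have hmeas : MeasurableSet C := by
    have : C = (fun x : EuclideanSpace ℝ (Fin 1) => x 0) ⁻¹' Set.Ico 0 2 := rfl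
    rw [this]
    exact (PiLp.continuous_apply 2 _ (0 : Fin 1)).measurable measurableSet_Ico
  have hnoadj : ∀ x y : C, ¬ (farGraph C).Adj x y := by
    rintro x y ⟨-, h2⟩
    rw [dist_e1] at h2
    rcases x.2 with ⟨a1, a2⟩
    rcases y.2 with ⟨b1, b2⟩
    have : |(x : EuclideanSpace ℝ (Fin 1)) 0 - (y : EuclideanSpace ℝ (Fin 1)) 0| < 2 := by
      rw [abs_lt]; constructor <;> linarith
    linarith
  have hcolC : (farGraph C).Colorable 1 :=
    ⟨⟨fun _ => 0, fun {a b} h => absurd h (hnoadj a b)⟩⟩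
  have hχC : (farGraph C).chromaticNumber ≠ ⊤ := by
    have := hcolC.chromaticNumber_le
    intro h; rw [h] at this; exact absurd this (by simp)
  have hcolU : (⊥ : SimpleGraph Unit).Colorable 1 :=
    ⟨⟨fun _ => 0, fun {a b} h => absurd h (by simp)⟩⟩
  have hχU : (⊥ : SimpleGraph Unit).chromaticNumber ≠ ⊤ := by
    have := hcolU.chromaticNumber_le
    intro h; rw [h] at this; exact absurd this (by simp)
  have hΨle : Ψ.toFun (farGraph C) ≤ 1 := by
    have hom : farGraph C →g (⊥ : SimpleGraph Unit) :=
      ⟨fun _ => (), fun {a b} h => absurd h (hnoadj a b)⟩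
    calc Ψ.toFun (farGraph C) ≤ Ψ.toFun (⊥ : SimpleGraph Unit) :=
          Ψ.mono _ _ hχC hχU hom
      _ = 1 := Ψ.single_eq _ ⟨()⟩ ⟨fun a b => rfl⟩
  have hcov : 2 ≤ cov 1 C := by
    have hne : {m : ℕ | ∃ X : Finset (EuclideanSpace ℝ (Fin 1)),
        X.card = m ∧ C ⊆ ⋃ x ∈ X, Metric.ball x 1}.Nonempty := by
      refine ⟨2, {pt (1/2), pt (3/2)}, ?_, ?_⟩
      · rw [Finset.card_insert_of_notMem, Finset.card_singleton]
        intro h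
        have := congrFun (congrArg WithLp.ofLp (Finset.mem_singleton.mp h)) 0
        rw [pt_apply, pt_apply] at this
        norm_num at this
      · intro x hx
        rcases hx with ⟨h1, h2⟩
        simp only [Set.mem_iUnion, Finset.mem_insert, Finset.mem_singleton,
          Metric.mem_ball, exists_prop]
        rcases lt_or_ge (x 0) 1 with h | h
        · exact ⟨_, Or.inl rfl, by
            rw [dist_e1, pt_apply, abs_lt]; constructor <;> linarith⟩
        · exact ⟨_, Or.inr rfl, by
            rw [dist_e1, pt_apply, abs_lt]; constructor <;> linarith⟩
    refine le_csInf hne ?_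
    rintro m ⟨X, hcard, hcover⟩
    by_contra hlt
    push_neg at hlt
    interval_cases m
    · rw [Finset.card_eq_zero] at hcard
      subst hcard
      have h0 : pt 0 ∈ C := by
        constructor <;> norm_num [pt_apply]
      have := hcover h0
      simp at this
    · rw [Finset.card_eq_one] at hcard
      obtain ⟨c, rfl⟩ := hcard
      have h0 : pt 0 ∈ C := by
        constructor <;> norm_num [pt_apply]
      have h0' := hcover h0
      simp only [Set.mem_iUnion, Finset.mem_singleton, Metric.mem_ball, exists_prop] at h0'
      obtain ⟨x, rfl, hx⟩ := h0'
      rw [dist_e1, pt_apply, zero_sub, abs_neg] at hx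
      have hx1 : -1 < x 0 ∧ x 0 < 1 := abs_lt.mp hx
      have ht : pt (x 0 + 1) ∈ C := by
        constructor
        · rw [pt_apply]; linarith [hx1.1]
        · rw [pt_apply]; linarith [hx1.2]
      have ht' := hcover ht
      simp only [Set.mem_iUnion, Finset.mem_singleton, Metric.mem_ball, exists_prop] at ht'
      obtain ⟨y, rfl, hy⟩ := ht'
      rw [dist_e1, pt_apply] at hy
      simp at hy
  have heq := hΨ 1 C hbdd hmeas
  rw [← heq] at hΨle
  have h2 : (2 : ℝ) ≤ (cov 1 C : ℝ) := by exact_mod_cast hcov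
  linarith
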